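/- Let r₀ ∈ (0, ∞) and let J = (0, r₀) or J = (r₀, ∞). If h ∈ W^{1,2}_loc(J) satisfies ∫_J r [h'(r)² + h(r)²/r²] dr < ∞, then sup_J h² ≤ 2‖h‖_{L²(J; dr/r)}‖h'‖_{L²(J; r dr)} ≤ ∫_J r [h'(r)² + h(r)²/r²] dr, and h(r) → 0 as r → 0 (in the case J = (0, r₀)) respectively h(r) → 0 as r → ∞ (in the case J = (r₀, ∞)). -/

import Mathlib

open MeasureTheory Set Filter
open scoped Interval

section Aux

variable {h h' : ℝ → ℝ}

lemma ptwise (h h' : ℝ → ℝ) {r : ℝ} (hr : 0 < r) :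
    h' r ^ 2 * r + h r ^ 2 / r = r * (h' r ^ 2 + h r ^ 2 / r ^ 2) := by
  field_simp

lemma ptwise_abs (h h' : ℝ → ℝ) {r : ℝ} (hr : 0 < r) :
    2 * |h r * h' r| ≤ r * (h' r ^ 2 + h r ^ 2 / r ^ 2) := by
  rw [← ptwise h h' hr]
  have key : 2 * |h r * h' r| * r ≤ (h' r ^ 2 * r + h r ^ 2 / r) * r := by
    have hc : h r ^ 2 / r * r = h r ^ 2 := div_mul_cancel₀ _ hr.ne'
    rw [add_mul, hc, abs_mul]
    have e : (|h r| - |h' r| * r) ^ 2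
        = h r ^ 2 - 2 * (|h r| * |h' r|) * r + h' r ^ 2 * r * r := by
      rw [sub_sq, mul_pow, sq_abs, sq_abs]; ring
    nlinarith [sq_nonneg (|h r| - |h' r| * r), e]
  exact le_of_mul_le_mul_right key hr

lemma cs_aux {J : Set ℝ} (hJm : MeasurableSet J) (hJpos : J ⊆ Ioi 0)
    (hmh : AEMeasurable h (volume.restrict J))
    (hmh' : AEMeasurable h' (volume.restrict J))
    (hA : IntegrableOn (fun r => h r ^ 2 / r) J)
    (hB : IntegrableOn (fun r => h' r ^ 2 * r) J) :
    ∫ r in J, 2 * |h r * h' r| ≤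
      2 * Real.sqrt (∫ r in J, h r ^ 2 / r) * Real.sqrt (∫ r in J, h' r ^ 2 * r) := by
  have hmem : ∀ᵐ r ∂(volume.restrict J), r ∈ J :=
    (ae_restrict_iff' hJm).2 (ae_of_all _ fun r hr => hr)
  set f := fun r => Real.sqrt (h r ^ 2 / r) with hf
  set g := fun r => Real.sqrt (h' r ^ 2 * r) with hg
  have hmf : AEMeasurable f (volume.restrict J) :=
    Real.continuous_sqrt.measurable.comp_aemeasurable
      ((hmh.pow_const 2).div aemeasurable_id)
  have hmg : AEMeasurable g (volume.restrict J) :=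
    Real.continuous_sqrt.measurable.comp_aemeasurable
      ((hmh'.pow_const 2).mul aemeasurable_id)
  have hfsq : ∀ᵐ r ∂(volume.restrict J), f r ^ 2 = h r ^ 2 / r := by
    filter_upwards [hmem] with r hr
    exact Real.sq_sqrt (div_nonneg (sq_nonneg _) (le_of_lt (hJpos hr)))
  have hgsq : ∀ᵐ r ∂(volume.restrict J), g r ^ 2 = h' r ^ 2 * r := by
    filter_upwards [hmem] with r hr
    exact Real.sq_sqrt (mul_nonneg (sq_nonneg _) (le_of_lt (hJpos hr)))
  have hrpow : ∀ x : ℝ, x ^ (2 : ℝ) = x ^ 2 := fun x => by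
    rw [show (2 : ℝ) = ((2 : ℕ) : ℝ) by norm_num, Real.rpow_natCast]
  have hfmem : MemLp f 2 (volume.restrict J) := by
    refine (memLp_two_iff_integrable_sq hmf.aestronglyMeasurable).2 ?_
    exact hA.congr (hfsq.mono fun r hr => hr.symm)
  have hgmem : MemLp g 2 (volume.restrict J) := by
    refine (memLp_two_iff_integrable_sq hmg.aestronglyMeasurable).2 ?_
    exact hB.congr (hgsq.mono fun r hr => hr.symm)
  have hconj : Real.HolderConjugate 2 2 := Real.HolderConjugate.two_two
  have hofReal : ENNReal.ofReal (2 : ℝ) = 2 := by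
    rw [show (2:ℝ) = ((2:ℕ):ℝ) by norm_num, ENNReal.ofReal_natCast]; norm_num
  have holder := MeasureTheory.integral_mul_le_Lp_mul_Lq_of_nonneg hconj
    (ae_of_all _ fun r => Real.sqrt_nonneg _) (ae_of_all _ fun r => Real.sqrt_nonneg _)
    (hofReal ▸ hfmem) (hofReal ▸ hgmem)
  -- rewrite both sides of holder
  have hfg : ∀ᵐ r ∂(volume.restrict J), f r * g r = |h r * h' r| := by
    filter_upwards [hmem] with r hr
    have hrpos : 0 < r := hJpos hr
    rw [hf, hg, ← Real.sqrt_mul (div_nonneg (sq_nonneg _) hrpos.le)]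
    rw [show h r ^ 2 / r * (h' r ^ 2 * r) = (h r * h' r) ^ 2 by field_simp]
    exact Real.sqrt_sq_eq_abs _
  have hL : ∫ r in J, f r * g r = ∫ r in J, |h r * h' r| := integral_congr_ae hfg
  have hR1 : ∫ r in J, f r ^ (2:ℝ) = ∫ r in J, h r ^ 2 / r := by
    refine integral_congr_ae ?_
    filter_upwards [hfsq] with r hr
    rw [hrpow, hr]
  have hR2 : ∫ r in J, g r ^ (2:ℝ) = ∫ r in J, h' r ^ 2 * r := by
    refine integral_congr_ae ?_
    filter_upwards [hgsq] with r hr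
    rw [hrpow, hr]
  rw [hL, hR1, hR2] at holder
  have hA0 : 0 ≤ ∫ r in J, h r ^ 2 / r := by
    refine setIntegral_nonneg hJm fun r hr => div_nonneg (sq_nonneg _) (le_of_lt (hJpos hr))
  have hB0 : 0 ≤ ∫ r in J, h' r ^ 2 * r := by
    refine setIntegral_nonneg hJm fun r hr => mul_nonneg (sq_nonneg _) (le_of_lt (hJpos hr))
  rw [← Real.sqrt_eq_rpow, ← Real.sqrt_eq_rpow] at holder
  calc ∫ r in J, 2 * |h r * h' r| = 2 * ∫ r in J, |h r * h' r| := by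
        rw [integral_const_mul]
    _ ≤ 2 * (Real.sqrt (∫ r in J, h r ^ 2 / r) * Real.sqrt (∫ r in J, h' r ^ 2 * r)) :=
        mul_le_mul_of_nonneg_left holder (by norm_num)
    _ = _ := by ring

/-- Core bundle of facts shared by both cases. -/
lemma core {J : Set ℝ} (hJo : IsOpen J) (hJpos : J ⊆ Ioi 0) (hJc : OrdConnected J)
    (hderiv : ∀ r ∈ J, HasDerivAt h (h' r) r)
    (hInt : IntegrableOn (fun r => r * (h' r ^ 2 + h r ^ 2 / r ^ 2)) J) :
    IntegrableOn (fun r => h r ^ 2 / r) J ∧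
    IntegrableOn (fun r => h' r ^ 2 * r) J ∧
    IntegrableOn (fun r => 2 * |h r * h' r|) J ∧
    (∫ r in J, 2 * |h r * h' r|) ≤
      2 * Real.sqrt (∫ r in J, h r ^ 2 / r) * Real.sqrt (∫ r in J, h' r ^ 2 * r) ∧
    (∀ a ∈ J, ∀ b ∈ J, |h b ^ 2 - h a ^ 2| ≤ ∫ r in Ι a b, 2 * |h r * h' r|) ∧
    2 * Real.sqrt (∫ r in J, h r ^ 2 / r) * Real.sqrt (∫ r in J, h' r ^ 2 * r) ≤
      ∫ r in J, r * (h' r ^ 2 + h r ^ 2 / r ^ 2) := by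
  have hJm : MeasurableSet J := hJo.measurableSet
  have hmem : ∀ᵐ r ∂(volume.restrict J), r ∈ J :=
    (ae_restrict_iff' hJm).2 (ae_of_all _ fun r hr => hr)
  have hcont : ContinuousOn h J := fun r hr => (hderiv r hr).continuousAt.continuousWithinAt
  have hmh : AEMeasurable h (volume.restrict J) := hcont.aemeasurable hJm
  have hderiv_ae : deriv h =ᵐ[volume.restrict J] h' :=
    (ae_restrict_iff' hJm).2 (ae_of_all _ fun r hr => (hderiv r hr).deriv)
  have hmh' : AEMeasurable h' (volume.restrict J) :=
    (measurable_deriv h).aemeasurable.congr hderiv_ae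
  have h1 : IntegrableOn (fun r => h r ^ 2 / r) J := by
    refine hInt.mono' (((hmh.pow_const 2).div aemeasurable_id).aestronglyMeasurable) ?_
    filter_upwards [hmem] with r hr
    have hrpos : 0 < r := hJpos hr
    rw [Real.norm_eq_abs, abs_of_nonneg (div_nonneg (sq_nonneg _) hrpos.le), ← ptwise h h' hrpos]
    nlinarith [sq_nonneg (h' r), hrpos]
  have h2 : IntegrableOn (fun r => h' r ^ 2 * r) J := by
    refine hInt.mono' (((hmh'.pow_const 2).mul aemeasurable_id).aestronglyMeasurable) ?_
    filter_upwards [hmem] with r hr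
    have hrpos : 0 < r := hJpos hr
    rw [Real.norm_eq_abs, abs_of_nonneg (mul_nonneg (sq_nonneg _) hrpos.le), ← ptwise h h' hrpos]
    have : 0 ≤ h r ^ 2 / r := div_nonneg (sq_nonneg _) hrpos.le
    linarith
  have h3 : IntegrableOn (fun r => 2 * |h r * h' r|) J := by
    refine hInt.mono' ?_ ?_
    · exact ((aemeasurable_const (b := (2:ℝ))).mul
        (continuous_abs.measurable.comp_aemeasurable (hmh.mul hmh'))).aestronglyMeasurable
    · filter_upwards [hmem] with r hr
      have hrpos : 0 < r := hJpos hr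
      rw [Real.norm_eq_abs, abs_of_nonneg (by positivity)]
      exact ptwise_abs h h' hrpos
  have h4 := cs_aux hJm hJpos hmh hmh' h1 h2
  have h3' : IntegrableOn (fun r => 2 * h r * h' r) J := by
    refine h3.mono' ((((aemeasurable_const (b := (2:ℝ))).mul hmh).mul hmh').aestronglyMeasurable) ?_
    refine ae_of_all _ fun r => ?_
    rw [Real.norm_eq_abs, mul_assoc, abs_mul, abs_two]
  have h5 : ∀ a ∈ J, ∀ b ∈ J, |h b ^ 2 - h a ^ 2| ≤ ∫ r in Ι a b, 2 * |h r * h' r| := by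
    intro a ha b hb
    have hsub : uIcc a b ⊆ J := hJc.uIcc_subset ha hb
    have hd2 : ∀ x ∈ uIcc a b, HasDerivAt (fun y => h y ^ 2) (2 * h x * h' x) x := by
      intro x hx
      have := (hderiv x (hsub hx)).pow 2
      norm_num at this
      exact this
    have hii : IntervalIntegrable (fun x => 2 * h x * h' x) volume a b :=
      (h3'.mono_set hsub).intervalIntegrable
    have hftc := intervalIntegral.integral_eq_sub_of_hasDerivAt hd2 hii
    rw [← hftc, ← Real.norm_eq_abs]
    refine le_trans intervalIntegral.norm_integral_le_integral_norm_uIoc (le_of_eq ?_)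
    refine setIntegral_congr_fun measurableSet_uIoc fun x hx => ?_
    rw [Real.norm_eq_abs, mul_assoc, abs_mul, abs_two]
  refine ⟨h1, h2, h3, h4, h5, ?_⟩
  have hA0 : 0 ≤ ∫ r in J, h r ^ 2 / r :=
    setIntegral_nonneg hJm fun r hr => div_nonneg (sq_nonneg _) (le_of_lt (hJpos hr))
  have hB0 : 0 ≤ ∫ r in J, h' r ^ 2 * r :=
    setIntegral_nonneg hJm fun r hr => mul_nonneg (sq_nonneg _) (le_of_lt (hJpos hr))
  have hsum : (∫ r in J, h r ^ 2 / r) + (∫ r in J, h' r ^ 2 * r)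
      = ∫ r in J, r * (h' r ^ 2 + h r ^ 2 / r ^ 2) := by
    rw [← integral_add h1 h2]
    refine setIntegral_congr_fun hJm fun r hr => ?_
    have := ptwise h h' (hJpos hr)
    simpa [add_comm] using this
  have := two_mul_le_add_sq (Real.sqrt (∫ r in J, h r ^ 2 / r))
    (Real.sqrt (∫ r in J, h' r ^ 2 * r))
  rw [Real.sq_sqrt hA0, Real.sq_sqrt hB0] at this
  linarith

lemma diff_le_tail {J T : Set ℝ} (hTJ : T ⊆ J)
    (h3 : IntegrableOn (fun r => 2 * |h r * h' r|) J)
    {a b : ℝ} (hab : Ι a b ⊆ T) :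
    (∫ r in Ι a b, 2 * |h r * h' r|) ≤ ∫ r in T, 2 * |h r * h' r| := by
  refine setIntegral_mono_set (h3.mono_set hTJ) ?_ (HasSubset.Subset.eventuallyLE hab)
  exact ae_of_all _ fun r => by positivity

lemma freq_Ioo {δ : ℝ} (hδ : 0 < δ) {r₀ : ℝ} (hδr : δ ≤ r₀)
    (hint : IntegrableOn (fun r => h r ^ 2 / r) (Ioo 0 r₀))
    {ε : ℝ} (hε : 0 < ε) : ∃ s ∈ Ioo 0 δ, h s ^ 2 < ε := by
  by_contra hcon
  push_neg at hcon
  have hbig : ∀ s ∈ Ioo (0:ℝ) δ, ε ≤ h s ^ 2 := hcon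
  have hintδ : IntegrableOn (fun r => h r ^ 2 / r) (Ioo 0 δ) :=
    hint.mono_set (Ioo_subset_Ioo_right hδr)
  have hinv : IntegrableOn (fun r => ε * r⁻¹) (Ioo 0 δ) := by
    refine hintδ.mono' ((measurable_const.mul measurable_inv).aestronglyMeasurable) ?_
    rw [ae_restrict_iff' measurableSet_Ioo]
    refine ae_of_all _ fun r hr => ?_
    have hrpos : 0 < r := hr.1
    rw [Real.norm_eq_abs, abs_of_nonneg (by positivity)]
    rw [mul_inv_le_iff₀ (by positivity), div_mul_eq_mul_div, le_div_iff₀ hrpos]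
    nlinarith [hbig r hr]
  have hinv' : IntegrableOn (fun r : ℝ => r ^ (-1 : ℝ)) (Ioo 0 δ) := by
    have := (hinv.const_mul ε⁻¹)
    refine this.congr ?_
    filter_upwards [ae_restrict_mem measurableSet_Ioo] with r hr
    rw [← mul_assoc, inv_mul_cancel₀ hε.ne', one_mul, Real.rpow_neg_one]
  have := (intervalIntegral.integrableOn_Ioo_rpow_iff hδ (s := -1)).mp hinv'
  exact absurd this (by norm_num)

lemma freq_Ioi {δ r₀ : ℝ} (hr₀ : 0 < r₀) (hδr : r₀ ≤ δ)
    (hint : IntegrableOn (fun r => h r ^ 2 / r) (Ioi r₀))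
    {ε : ℝ} (hε : 0 < ε) : ∃ s ∈ Ioi δ, h s ^ 2 < ε := by
  by_contra hcon
  push_neg at hcon
  have hδpos : 0 < δ := lt_of_lt_of_le hr₀ hδr
  have hintδ : IntegrableOn (fun r => h r ^ 2 / r) (Ioi δ) :=
    hint.mono_set (Ioi_subset_Ioi hδr)
  have hinv : IntegrableOn (fun r => ε * r⁻¹) (Ioi δ) := by
    refine hintδ.mono' ((measurable_const.mul measurable_inv).aestronglyMeasurable) ?_
    rw [ae_restrict_iff' measurableSet_Ioi]
    refine ae_of_all _ fun r hr => ?_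
    have hrpos : 0 < r := lt_trans hδpos hr
    rw [Real.norm_eq_abs, abs_of_nonneg (by positivity)]
    rw [mul_inv_le_iff₀ (by positivity), div_mul_eq_mul_div, le_div_iff₀ hrpos]
    nlinarith [hcon r hr]
  have hinv' : IntegrableOn (fun r : ℝ => r ^ (-1 : ℝ)) (Ioi δ) := by
    have := (hinv.const_mul ε⁻¹)
    refine this.congr ?_
    filter_upwards [ae_restrict_mem measurableSet_Ioi] with r hr
    rw [← mul_assoc, inv_mul_cancel₀ hε.ne', one_mul, Real.rpow_neg_one]
  have := (integrableOn_Ioi_rpow_iff hδpos (s := -1)).mp hinv'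
  exact absurd this (by norm_num)

lemma tail_Ioo {g : ℝ → ℝ} {r₀ : ℝ} (hr₀ : 0 < r₀)
    (hg0 : ∀ r, 0 ≤ g r) (hgi : IntegrableOn g (Ioo 0 r₀))
    {ε : ℝ} (hε : 0 < ε) : ∃ δ ∈ Ioo 0 r₀, (∫ r in Ioo 0 δ, g r) < ε := by
  set s : ℕ → Set ℝ := fun n => Ioo (r₀ / (n + 2)) r₀ with hs
  have hsm : ∀ n, MeasurableSet (s n) := fun n => measurableSet_Ioo
  have hmono : Monotone s := by
    intro n m hnm
    refine Ioo_subset_Ioo_left (div_le_div_of_nonneg_left hr₀.le (by positivity) ?_)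
    have : (n : ℝ) ≤ m := Nat.cast_le.2 hnm
    linarith
  have hUnion : ⋃ n, s n = Ioo 0 r₀ := by
    ext x
    simp only [mem_iUnion, hs, mem_Ioo]
    constructor
    · rintro ⟨n, h1, h2⟩
      exact ⟨lt_trans (by positivity) h1, h2⟩
    · rintro ⟨hx0, hxr⟩
      obtain ⟨n, hn⟩ := exists_nat_gt (r₀ / x)
      refine ⟨n, ?_, hxr⟩
      rw [div_lt_iff₀ (by positivity)]
      have : r₀ < (n : ℝ) * x := (div_lt_iff₀ hx0).1 hn
      nlinarith
  have hten := tendsto_setIntegral_of_monotone hsm hmono (hUnion ▸ hgi)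
  rw [hUnion] at hten
  have hev : ∀ᶠ n in atTop, (∫ r in Ioo 0 r₀, g r) - ε < ∫ r in s n, g r :=
    hten.eventually (eventually_gt_nhds (by linarith))
  obtain ⟨n, hn⟩ := hev.exists
  refine ⟨r₀ / (n + 2), ⟨by positivity, by
    rw [div_lt_iff₀ (by positivity)]; nlinarith⟩, ?_⟩
  have hdisj : Disjoint (Ioo (0:ℝ) (r₀ / (n + 2))) (s n) := by
    rw [hs]
    refine Set.disjoint_left.2 fun x hx1 hx2 => ?_
    exact absurd hx2.1 (not_lt.2 hx1.2.le)
  have hsubJ : Ioo (0:ℝ) (r₀ / (n + 2)) ∪ s n ⊆ Ioo 0 r₀ := by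
    rw [hs]
    refine union_subset ?_ ?_
    · refine Ioo_subset_Ioo_right ?_
      rw [div_le_iff₀ (by positivity)]; nlinarith
    · exact Ioo_subset_Ioo_left (by positivity)
  have hunion_int : (∫ r in Ioo (0:ℝ) (r₀ / (n + 2)), g r) + ∫ r in s n, g r
      = ∫ r in Ioo (0:ℝ) (r₀ / (n + 2)) ∪ s n, g r := by
    rw [setIntegral_union hdisj (hsm n) (hgi.mono_set (fun x hx => hsubJ (Or.inl hx)))
      (hgi.mono_set (fun x hx => hsubJ (Or.inr hx)))]
  have hle : (∫ r in Ioo (0:ℝ) (r₀ / (n + 2)) ∪ s n, g r) ≤ ∫ r in Ioo 0 r₀, g r := by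
    refine setIntegral_mono_set hgi (ae_of_all _ fun r => hg0 r)
      (HasSubset.Subset.eventuallyLE hsubJ)
  linarith

lemma tail_Ioi {g : ℝ → ℝ} {r₀ : ℝ} (hr₀ : 0 < r₀)
    (hg0 : ∀ r, 0 ≤ g r) (hgi : IntegrableOn g (Ioi r₀))
    {ε : ℝ} (hε : 0 < ε) : ∃ δ ∈ Ioi r₀, (∫ r in Ioi δ, g r) < ε := by
  set s : ℕ → Set ℝ := fun n => Ioo r₀ (r₀ + n + 1) with hs
  have hsm : ∀ n, MeasurableSet (s n) := fun n => measurableSet_Ioo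
  have hmono : Monotone s := by
    intro n m hnm
    refine Ioo_subset_Ioo_right ?_
    have : (n : ℝ) ≤ m := Nat.cast_le.2 hnm
    linarith
  have hUnion : ⋃ n, s n = Ioi r₀ := by
    ext x
    simp only [mem_iUnion, hs, mem_Ioo, mem_Ioi]
    constructor
    · rintro ⟨n, h1, _⟩; exact h1
    · intro hx
      obtain ⟨n, hn⟩ := exists_nat_gt (x - r₀)
      exact ⟨n, hx, by linarith⟩
  have hten := tendsto_setIntegral_of_monotone hsm hmono (hUnion ▸ hgi)
  rw [hUnion] at hten
  have hev : ∀ᶠ n in atTop, (∫ r in Ioi r₀, g r) - ε < ∫ r in s n, g r :=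
    hten.eventually (eventually_gt_nhds (by linarith))
  obtain ⟨n, hn⟩ := hev.exists
  refine ⟨r₀ + n + 1, by
    simp only [mem_Ioi]
    have : (0:ℝ) ≤ n := Nat.cast_nonneg n
    linarith, ?_⟩
  have hdisj : Disjoint (s n) (Ioi (r₀ + n + 1)) := by
    rw [hs]
    refine Set.disjoint_left.2 fun x hx1 hx2 => ?_
    exact absurd hx1.2 (not_lt.2 (le_of_lt hx2))
  have hsubJ : s n ∪ Ioi (r₀ + n + 1) ⊆ Ioi r₀ := by
    rw [hs]
    refine union_subset (fun x hx => hx.1) fun x hx => ?_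
    have : r₀ + n + 1 < x := hx
    simp only [mem_Ioi]
    have : (0:ℝ) ≤ n := Nat.cast_nonneg n
    linarith
  have hunion_int : (∫ r in s n, g r) + ∫ r in Ioi (r₀ + n + 1), g r
      = ∫ r in s n ∪ Ioi (r₀ + n + 1), g r := by
    rw [setIntegral_union hdisj measurableSet_Ioi
      (hgi.mono_set (fun x hx => hsubJ (Or.inl hx)))
      (hgi.mono_set (fun x hx => hsubJ (Or.inr hx)))]
  have hle : (∫ r in s n ∪ Ioi (r₀ + n + 1), g r) ≤ ∫ r in Ioi r₀, g r :=
    setIntegral_mono_set hgi (ae_of_all _ fun r => hg0 r)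
      (HasSubset.Subset.eventuallyLE hsubJ)
  linarith

end Aux

/-- Let `r₀ ∈ (0, ∞)` and `J = (0, r₀)` or `J = (r₀, ∞)`. If
`h ∈ W^{1,2}_loc(J)` satisfies `∫_J r [h'² + h²/r²] dr < ∞`, then
`sup_J h² ≤ 2‖h‖_{L²(J; dr/r)}‖h'‖_{L²(J; r dr)} ≤ ∫_J r [h'² + h²/r²] dr`
and `h(r) → 0` as `r → 0` (resp. `r → ∞`). -/
theorem stmt1 (r₀ : ℝ) (hr₀ : 0 < r₀) :
    (∀ h h' : ℝ → ℝ,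
      (∀ r ∈ Ioo 0 r₀, HasDerivAt h (h' r) r) →
      IntegrableOn (fun r => r * (h' r ^ 2 + h r ^ 2 / r ^ 2)) (Ioo 0 r₀) →
      (∀ r ∈ Ioo 0 r₀, h r ^ 2 ≤
          2 * Real.sqrt (∫ r in Ioo 0 r₀, h r ^ 2 / r) *
            Real.sqrt (∫ r in Ioo 0 r₀, h' r ^ 2 * r)) ∧
      2 * Real.sqrt (∫ r in Ioo 0 r₀, h r ^ 2 / r) *
          Real.sqrt (∫ r in Ioo 0 r₀, h' r ^ 2 * r) ≤
        (∫ r in Ioo 0 r₀, r * (h' r ^ 2 + h r ^ 2 / r ^ 2)) ∧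
      Tendsto h (nhdsWithin 0 (Ioi 0)) (nhds 0)) ∧
    (∀ h h' : ℝ → ℝ,
      (∀ r ∈ Ioi r₀, HasDerivAt h (h' r) r) →
      IntegrableOn (fun r => r * (h' r ^ 2 + h r ^ 2 / r ^ 2)) (Ioi r₀) →
      (∀ r ∈ Ioi r₀, h r ^ 2 ≤
          2 * Real.sqrt (∫ r in Ioi r₀, h r ^ 2 / r) *
            Real.sqrt (∫ r in Ioi r₀, h' r ^ 2 * r)) ∧
      2 * Real.sqrt (∫ r in Ioi r₀, h r ^ 2 / r) *
          Real.sqrt (∫ r in Ioi r₀, h' r ^ 2 * r) ≤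
        (∫ r in Ioi r₀, r * (h' r ^ 2 + h r ^ 2 / r ^ 2)) ∧
      Tendsto h atTop (nhds 0)) := by
  constructor
  · intro h h' hderiv hInt
    have hJpos : Ioo (0:ℝ) r₀ ⊆ Ioi 0 := fun x hx => hx.1
    obtain ⟨h1, h2, h3, h4, h5, h6⟩ :=
      core isOpen_Ioo hJpos ordConnected_Ioo hderiv hInt
    have hdiff : ∀ a ∈ Ioo (0:ℝ) r₀, ∀ b ∈ Ioo (0:ℝ) r₀,
        |h b ^ 2 - h a ^ 2| ≤ ∫ r in Ioo (0:ℝ) r₀, 2 * |h r * h' r| := by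
      intro a ha b hb
      refine (h5 a ha b hb).trans (diff_le_tail (subset_refl _) h3 ?_)
      exact uIoc_subset_uIcc.trans ((ordConnected_Ioo).uIcc_subset ha hb)
    refine ⟨?_, h6, ?_⟩
    · intro r hr
      refine le_of_forall_pos_le_add fun ε hε => ?_
      obtain ⟨s, hs, hsε⟩ := freq_Ioo hr₀ le_rfl h1 hε
      have := hdiff s hs r hr
      have habs : h r ^ 2 - h s ^ 2 ≤ |h r ^ 2 - h s ^ 2| := le_abs_self _
      linarith [h4]
    · -- tendsto
      have hsq : Tendsto (fun r => h r ^ 2) (nhdsWithin 0 (Ioi 0)) (nhds 0) := by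
        rw [NormedAddCommGroup.tendsto_nhds_zero]
        intro ε hε
        obtain ⟨δ, hδ, hδε⟩ := tail_Ioo hr₀ (fun r => by positivity) h3 (half_pos hε)
        obtain ⟨s, hs, hsε⟩ := freq_Ioo hδ.1 hδ.2.le h1 (half_pos hε)
        have hsJ : s ∈ Ioo 0 r₀ := ⟨hs.1, lt_trans hs.2 hδ.2⟩
        filter_upwards [Ioo_mem_nhdsGT_of_mem (left_mem_Ico.2 hs.1)] with r hr
        have hrJ : r ∈ Ioo 0 r₀ := ⟨hr.1, lt_trans hr.2 (lt_trans hs.2 hδ.2)⟩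
        have hd := h5 s hsJ r hrJ
        have hsub : Ι s r ⊆ Ioo 0 δ := by
          rw [uIoc_of_ge hr.2.le]
          exact fun x hx => ⟨lt_trans hr.1 hx.1, lt_of_le_of_lt hx.2 hs.2⟩
        have := diff_le_tail (T := Ioo 0 δ) (J := Ioo 0 r₀)
          (fun x hx => ⟨hx.1, lt_trans hx.2 hδ.2⟩) h3 hsub
        have habs : h r ^ 2 - h s ^ 2 ≤ |h r ^ 2 - h s ^ 2| := le_abs_self _
        rw [Real.norm_eq_abs, abs_of_nonneg (sq_nonneg _)]
        linarith
      have habs : Tendsto (fun r => |h r|) (nhdsWithin 0 (Ioi 0)) (nhds 0) := by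
        have := hsq.sqrt
        rw [Real.sqrt_zero] at this
        refine this.congr fun r => Real.sqrt_sq_eq_abs _
      have hneg : Tendsto (fun r => -|h r|) (nhdsWithin 0 (Ioi 0)) (nhds 0) := by
        simpa using habs.neg
      exact tendsto_of_tendsto_of_tendsto_of_le_of_le hneg habs
        (fun r => neg_abs_le _) (fun r => le_abs_self _)
  · intro h h' hderiv hInt
    have hJpos : Ioi r₀ ⊆ Ioi 0 := fun x hx => lt_trans hr₀ hx
    obtain ⟨h1, h2, h3, h4, h5, h6⟩ :=
      core isOpen_Ioi hJpos ordConnected_Ioi hderiv hInt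
    have hdiff : ∀ a ∈ Ioi r₀, ∀ b ∈ Ioi r₀,
        |h b ^ 2 - h a ^ 2| ≤ ∫ r in Ioi r₀, 2 * |h r * h' r| := by
      intro a ha b hb
      refine (h5 a ha b hb).trans (diff_le_tail (subset_refl _) h3 ?_)
      exact uIoc_subset_uIcc.trans ((ordConnected_Ioi).uIcc_subset ha hb)
    refine ⟨?_, h6, ?_⟩
    · intro r hr
      refine le_of_forall_pos_le_add fun ε hε => ?_
      obtain ⟨s, hs, hsε⟩ := freq_Ioi hr₀ le_rfl h1 hε
      have := hdiff s hs r hr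
      have habs : h r ^ 2 - h s ^ 2 ≤ |h r ^ 2 - h s ^ 2| := le_abs_self _
      linarith [h4]
    · have hsq : Tendsto (fun r => h r ^ 2) atTop (nhds 0) := by
        rw [NormedAddCommGroup.tendsto_nhds_zero]
        intro ε hε
        obtain ⟨δ, hδ, hδε⟩ := tail_Ioi hr₀ (fun r => by positivity) h3 (half_pos hε)
        obtain ⟨s, hs, hsε⟩ := freq_Ioi hr₀ (le_of_lt hδ) h1 (half_pos hε)
        have hsJ : s ∈ Ioi r₀ := mem_Ioi.2 (lt_trans (mem_Ioi.1 hδ) hs)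
        filter_upwards [Ioi_mem_atTop s] with r hr
        have hrJ : r ∈ Ioi r₀ := mem_Ioi.2 (lt_trans (mem_Ioi.1 hsJ) hr)
        have hd := h5 s hsJ r hrJ
        have hsub : Ι s r ⊆ Ioi δ := by
          rw [uIoc_of_le (le_of_lt hr)]
          exact fun x hx => lt_trans hs hx.1
        have := diff_le_tail (T := Ioi δ) (J := Ioi r₀)
          (fun x hx => mem_Ioi.2 (lt_trans (mem_Ioi.1 hδ) hx)) h3 hsub
        have habs : h r ^ 2 - h s ^ 2 ≤ |h r ^ 2 - h s ^ 2| := le_abs_self _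
        rw [Real.norm_eq_abs, abs_of_nonneg (sq_nonneg _)]
        linarith
      have habs : Tendsto (fun r => |h r|) atTop (nhds 0) := by
        have := hsq.sqrt
        rw [Real.sqrt_zero] at this
        refine this.congr fun r => Real.sqrt_sq_eq_abs _
      have hneg : Tendsto (fun r => -|h r|) atTop (nhds 0) := by
        simpa using habs.neg
      exact tendsto_of_tendsto_of_tendsto_of_le_of_le hneg habs
        (fun r => neg_abs_le _) (fun r => le_abs_self _)
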